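/- For every γ ∈ 𝕋 and every z in the open unit disc 𝔻, the Cauchy transform of the spectral measure μ_γ and the characteristic function θ of Û₀ satisfy Kμ_γ(z)·(1 − conj(γ)·θ(z)) = 1. -/

import Mathlib

open MeasureTheory Filter ContinuousLinearMap
open scoped ENNReal Topology ComplexConjugate

noncomputable section

set_option linter.unusedSectionVars false
set_option linter.unusedVariables false
set_option maxHeartbeats 1000000

/-- The Cauchy transform `K(fτ)(z) = ∫ f(ξ)/(1 - conj(ξ) z) dτ(ξ)` of the measure `fτ`. -/
def cauchyT (τ : Measure ℂ) (f : ℂ → ℂ) (z : ℂ) : ℂ :=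
  ∫ ξ, f ξ / (1 - conj ξ * z) ∂τ

/-- The function `ξ ↦ conj ξ`. -/
def xibarFun : ℂ → ℂ := fun ξ => conj ξ

/-- The constant function `1`. -/
def oneFun : ℂ → ℂ := fun _ => 1

/-- The operator `Û_γ = M_ξ + (γ - 1)⟨·, ξ̄⟩1` on `L²(μ)`, where `Mxi` is multiplication by
the independent variable, `xibar` is the function `ξ ↦ conj ξ` and `one` is the constant
function `1`.  (Here `⟨f, ξ̄⟩ = ∫ f(ξ) ξ dμ(ξ)` is linear in `f`.) -/
def clarkOp (μ : Measure ℂ) (Mxi : Lp ℂ 2 μ →L[ℂ] Lp ℂ 2 μ) (xibar one : Lp ℂ 2 μ)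
    (γ : ℂ) : Lp ℂ 2 μ →L[ℂ] Lp ℂ 2 μ :=
  Mxi + (γ - 1) • ((innerSL ℂ xibar).smulRight one)

/-- The scalar characteristic function
`θ(z) = ⟨(-U + z D₊ (I - z U*)⁻¹ D) ξ̄, 1⟩` of a contraction `U` on `L²(μ)` with defect
operators `Dm = (I - U*U)^{1/2}` and `Ds = (I - U U*)^{1/2}`. -/
def charF {μ : Measure ℂ} (U Dm Ds : Lp ℂ 2 μ →L[ℂ] Lp ℂ 2 μ) (xibar one : Lp ℂ 2 μ)
    (z : ℂ) : ℂ :=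
  inner ℂ one ((-U + z • (Ds ∘L Ring.inverse (1 - z • ContinuousLinearMap.adjoint U) ∘L Dm))
    xibar)

/-- `T^{(k)}`: nonnegative powers of `T`; powers of the adjoint for negative `k`. -/
def zpowOp {E : Type*} [NormedAddCommGroup E] [InnerProductSpace ℂ E] [CompleteSpace E]
    (T : E →L[ℂ] E) (k : ℤ) : E →L[ℂ] E :=
  if 0 ≤ k then T ^ k.toNat else (ContinuousLinearMap.adjoint T) ^ (-k).toNat

/-- Normalized Lebesgue (arclength) measure on the unit circle `𝕋`, as a measure on `ℂ`. -/
def mCircle : Measure ℂ :=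
  (ENNReal.ofReal (2 * Real.pi))⁻¹ •
    (volume.restrict (Set.Ioc (0:ℝ) (2 * Real.pi))).map (circleMap 0 1)

/-- A function on the disc is *inner* if its radial limits exist and have modulus one at
`m`-almost every point of the unit circle. -/
def IsInnerFun (f : ℂ → ℂ) : Prop :=
  ∀ᵐ ξ ∂mCircle, ∃ L : ℂ,
    Tendsto (fun r : ℝ => f ((r : ℂ) * ξ)) (𝓝[<] (1:ℝ)) (𝓝 L) ∧ ‖L‖ = 1

/-- A positive operator fixes any vector fixed by its square. -/
lemma pos_sq_fix {E : Type*} [NormedAddCommGroup E] [InnerProductSpace ℂ E]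
    [CompleteSpace E] {S : E →L[ℂ] E} (hS : S.IsPositive) {x : E} (h : S (S x) = x) :
    S x = x := by
  set y := S x - x with hy
  have hSy : S y = -y := by
    rw [hy, map_sub, h]; abel
  have h1 : 0 ≤ S.reApplyInnerSelf y := hS.2 y
  have h2 : S.reApplyInnerSelf y = -‖y‖ ^ 2 := by
    rw [ContinuousLinearMap.reApplyInnerSelf_apply, hSy, inner_neg_left]
    simp [← inner_self_eq_norm_sq (𝕜 := ℂ) y]
  have h3 : ‖y‖ ^ 2 ≤ 0 := by rw [h2] at h1; linarith
  have h4 : y = 0 := by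
    have := norm_nonneg y
    have : ‖y‖ = 0 := by nlinarith
    simpa using this
  have : S x - x = 0 := h4
  linear_combination (norm := module) this

lemma ae_abs_one {μ : Measure ℂ} (hμ : μ (Metric.sphere (0:ℂ) 1)ᶜ = 0) :
    ∀ᵐ ξ ∂μ, ‖ξ‖ = 1 := by
  rw [MeasureTheory.ae_iff]
  refine measure_mono_null ?_ hμ
  intro x hx
  simp only [Set.mem_setOf_eq] at hx
  simp [Metric.mem_sphere, Complex.dist_eq, hx]

section L2facts

variable {μ : Measure ℂ} [IsProbabilityMeasure μ]
  {Mxi : Lp ℂ 2 μ →L[ℂ] Lp ℂ 2 μ} {one xibar : Lp ℂ 2 μ}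

lemma L2inner' (f g : Lp ℂ 2 μ) :
    (inner ℂ f g : ℂ) = ∫ ξ, conj (f ξ) * (g ξ) ∂μ := by
  rw [MeasureTheory.L2.inner_def]
  simp [RCLike.inner_apply]
  exact integral_congr_ae (Eventually.of_forall fun ξ => mul_comm _ _)

lemma inner_one_one'' (hone : ∀ᵐ ξ ∂μ, one ξ = 1) : (inner ℂ one one : ℂ) = 1 := by
  rw [L2inner']
  rw [integral_congr_ae (g := fun _ => (1:ℂ)) (by filter_upwards [hone] with ξ h; simp [h])]
  simp

lemma inner_xibar_xibar' (hμ : μ (Metric.sphere (0:ℂ) 1)ᶜ = 0)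
    (hxibar : ∀ᵐ ξ ∂μ, xibar ξ = conj ξ) : (inner ℂ xibar xibar : ℂ) = 1 := by
  rw [L2inner']
  rw [integral_congr_ae (g := fun _ => (1:ℂ)) ?_]
  · simp
  · filter_upwards [hxibar, ae_abs_one hμ] with ξ h h1
    rw [h, Complex.conj_conj, Complex.mul_conj, Complex.normSq_eq_norm_sq, h1]
    simp

lemma inner_one_Mxi' (hμ : μ (Metric.sphere (0:ℂ) 1)ᶜ = 0)
    (hMxi : ∀ f : Lp ℂ 2 μ, ∀ᵐ ξ ∂μ, (Mxi f) ξ = ξ * f ξ)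
    (hone : ∀ᵐ ξ ∂μ, one ξ = 1) (hxibar : ∀ᵐ ξ ∂μ, xibar ξ = conj ξ)
    (g : Lp ℂ 2 μ) : (inner ℂ one (Mxi g) : ℂ) = inner ℂ xibar g := by
  rw [L2inner', L2inner']
  refine integral_congr_ae ?_
  filter_upwards [hone, hxibar, hMxi g] with ξ h1 h2 h3
  rw [h1, h2, h3, Complex.conj_conj]
  simp [mul_assoc]

lemma inner_Mxi_Mxi' (hμ : μ (Metric.sphere (0:ℂ) 1)ᶜ = 0)
    (hMxi : ∀ f : Lp ℂ 2 μ, ∀ᵐ ξ ∂μ, (Mxi f) ξ = ξ * f ξ)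
    (f g : Lp ℂ 2 μ) : (inner ℂ (Mxi f) (Mxi g) : ℂ) = inner ℂ f g := by
  rw [L2inner', L2inner']
  refine integral_congr_ae ?_
  filter_upwards [hMxi f, hMxi g, ae_abs_one hμ] with ξ h1 h2 h3
  rw [h1, h2]
  have : conj ξ * ξ = 1 := by
    rw [mul_comm, Complex.mul_conj, Complex.normSq_eq_norm_sq, h3]; simp
  calc conj (ξ * f ξ) * (ξ * g ξ) = (conj ξ * ξ) * (conj (f ξ) * g ξ) := by
        rw [map_mul]; ring
    _ = conj (f ξ) * g ξ := by rw [this, one_mul]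

lemma Mxi_xibar_eq_one' (hμ : μ (Metric.sphere (0:ℂ) 1)ᶜ = 0)
    (hMxi : ∀ f : Lp ℂ 2 μ, ∀ᵐ ξ ∂μ, (Mxi f) ξ = ξ * f ξ)
    (hone : ∀ᵐ ξ ∂μ, one ξ = 1) (hxibar : ∀ᵐ ξ ∂μ, xibar ξ = conj ξ) :
    Mxi xibar = one := by
  refine MeasureTheory.Lp.ext ?_
  filter_upwards [hMxi xibar, hone, hxibar, ae_abs_one hμ] with ξ h1 h2 h3 h4
  rw [h1, h2, h3, Complex.mul_conj, Complex.normSq_eq_norm_sq, h4]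
  simp

lemma clarkOp_apply (γ : ℂ) (f : Lp ℂ 2 μ) :
    clarkOp μ Mxi xibar one γ f = Mxi f + (γ - 1) • ((inner ℂ xibar f : ℂ) • one) := by
  simp [clarkOp, ContinuousLinearMap.smul_apply, ContinuousLinearMap.smulRight_apply,
    innerSL_apply_apply]

variable (hμ : μ (Metric.sphere (0:ℂ) 1)ᶜ = 0)
  (hMxi : ∀ f : Lp ℂ 2 μ, ∀ᵐ ξ ∂μ, (Mxi f) ξ = ξ * f ξ)
  (hone : ∀ᵐ ξ ∂μ, one ξ = 1) (hxibar : ∀ᵐ ξ ∂μ, xibar ξ = conj ξ)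

include hμ hMxi hone hxibar

lemma inner_Mxi_one : ∀ f : Lp ℂ 2 μ, (inner ℂ (Mxi f) one : ℂ) = conj (inner ℂ xibar f : ℂ) := by
  intro f
  rw [← inner_conj_symm, inner_one_Mxi' hμ hMxi hone hxibar]

lemma inner_clark_clark (γ : ℂ) (f g : Lp ℂ 2 μ) :
    (inner ℂ (clarkOp μ Mxi xibar one γ f) (clarkOp μ Mxi xibar one γ g) : ℂ)
      = inner ℂ f g + (γ * conj γ - 1) * (conj (inner ℂ xibar f : ℂ) * (inner ℂ xibar g : ℂ)) := by
  rw [clarkOp_apply, clarkOp_apply, inner_add_left, inner_add_right, inner_add_right]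
  simp only [inner_smul_left, inner_smul_right]
  rw [inner_Mxi_Mxi' hμ hMxi, inner_one_one'' hone, inner_one_Mxi' hμ hMxi hone hxibar,
    inner_Mxi_one hμ hMxi hone hxibar]
  simp only [map_sub, map_one, map_zero, Complex.conj_conj]
  ring

lemma U0_xibar : clarkOp μ Mxi xibar one 0 xibar = 0 := by
  rw [clarkOp_apply, Mxi_xibar_eq_one' hμ hMxi hone hxibar,
    inner_xibar_xibar' hμ hxibar]
  simp

lemma adj_U0_one : ContinuousLinearMap.adjoint (clarkOp μ Mxi xibar one 0) one = 0 := by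
  apply ext_inner_left ℂ
  intro v
  rw [adjoint_inner_right, inner_zero_right, clarkOp_apply, inner_add_left]
  simp only [inner_smul_left]
  rw [inner_Mxi_one hμ hMxi hone hxibar, inner_one_one'' hone]
  simp only [map_sub, map_one, map_zero, mul_one, zero_sub, map_neg, neg_mul, one_mul]
  ring

lemma adj_clark_apply (γ : ℂ) (w : Lp ℂ 2 μ) :
    ContinuousLinearMap.adjoint (clarkOp μ Mxi xibar one γ) w
      = ContinuousLinearMap.adjoint (clarkOp μ Mxi xibar one 0) w
        + (conj γ * (inner ℂ one w : ℂ)) • xibar := by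
  apply ext_inner_left ℂ
  intro v
  rw [adjoint_inner_right, inner_add_right, adjoint_inner_right, inner_smul_right,
    clarkOp_apply, clarkOp_apply, inner_add_left, inner_add_left]
  simp only [inner_smul_left, ← inner_conj_symm xibar v]
  simp only [map_sub, map_one, map_zero, Complex.conj_conj]
  ring

lemma norm_clark_le (γ : ℂ) (hγle : ‖γ‖ ≤ 1) :
    ‖clarkOp μ Mxi xibar one γ‖ ≤ 1 := by
  refine ContinuousLinearMap.opNorm_le_bound _ zero_le_one (fun f => ?_)
  have h := inner_clark_clark hμ hMxi hone hxibar γ f f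
  rw [inner_self_eq_norm_sq_to_K, inner_self_eq_norm_sq_to_K] at h
  set a : ℂ := inner ℂ xibar f
  have hγγ : γ * conj γ = (‖γ‖ ^ 2 : ℝ) := by
    rw [Complex.mul_conj, Complex.normSq_eq_norm_sq]
  have haa : conj a * a = (‖a‖ ^ 2 : ℝ) := by
    rw [mul_comm, Complex.mul_conj, Complex.normSq_eq_norm_sq]
  rw [hγγ, haa] at h
  have h2 : (‖clarkOp μ Mxi xibar one γ f‖ ^ 2 : ℝ)
      = ‖f‖ ^ 2 + (‖γ‖ ^ 2 - 1) * ‖a‖ ^ 2 := by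
    have h' : ((‖clarkOp μ Mxi xibar one γ f‖ ^ 2 : ℝ) : ℂ)
        = ((‖f‖ ^ 2 + (‖γ‖ ^ 2 - 1) * ‖a‖ ^ 2 : ℝ) : ℂ) := by
      push_cast at h ⊢
      exact h
    exact_mod_cast h'
  have hg2 : ‖γ‖ ^ 2 ≤ 1 := by nlinarith [norm_nonneg γ]
  have hA : 0 ≤ ‖a‖ ^ 2 := sq_nonneg _
  have h3 : ‖clarkOp μ Mxi xibar one γ f‖ ^ 2 ≤ ‖f‖ ^ 2 := by nlinarith
  rw [one_mul]
  exact le_of_pow_le_pow_left₀ two_ne_zero (norm_nonneg f) h3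

end L2facts

theorem statement11
    (μ : Measure ℂ) [IsProbabilityMeasure μ] (hμ : μ (Metric.sphere (0:ℂ) 1)ᶜ = 0)
    (Mxi : Lp ℂ 2 μ →L[ℂ] Lp ℂ 2 μ)
    (hMxi : ∀ f : Lp ℂ 2 μ, ∀ᵐ ξ ∂μ, (Mxi f) ξ = ξ * f ξ)
    (one xibar : Lp ℂ 2 μ)
    (hone : ∀ᵐ ξ ∂μ, one ξ = 1) (hxibar : ∀ᵐ ξ ∂μ, xibar ξ = conj ξ)
    -- `D0` and `Ds0` are the positive square roots of `I - Û₀* Û₀` and `I - Û₀ Û₀*`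
    (D0 Ds0 : Lp ℂ 2 μ →L[ℂ] Lp ℂ 2 μ)
    (hD0pos : D0.IsPositive)
    (hD0 : D0 ∘L D0 = 1 - ContinuousLinearMap.adjoint (clarkOp μ Mxi xibar one 0) ∘L
      clarkOp μ Mxi xibar one 0)
    (hDs0pos : Ds0.IsPositive)
    (hDs0 : Ds0 ∘L Ds0 = 1 - clarkOp μ Mxi xibar one 0 ∘L
      ContinuousLinearMap.adjoint (clarkOp μ Mxi xibar one 0))
    (γ : ℂ) (hγ : ‖γ‖ = 1)
    -- `μγ` is the spectral measure of `Û_γ` with respect to the cyclic vector `1`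
    (μγ : Measure ℂ) [IsProbabilityMeasure μγ] (hμγsupp : μγ (Metric.sphere (0:ℂ) 1)ᶜ = 0)
    (hμγmom : ∀ k : ℤ,
      (inner ℂ one (zpowOp (clarkOp μ Mxi xibar one γ) k one) : ℂ) = ∫ ξ, ξ ^ k ∂μγ)
    (z : ℂ) (hz : ‖z‖ < 1) :
    cauchyT μγ oneFun z *
      (1 - conj γ * charF (clarkOp μ Mxi xibar one 0) D0 Ds0 xibar one z) = 1 := by
  classical
  set U0 := clarkOp μ Mxi xibar one 0 with hU0def
  set Uγ := clarkOp μ Mxi xibar one γ with hUγdef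
  have hzn : ‖z‖ < 1 := by exact hz
  have hU0n : ‖U0‖ ≤ 1 := norm_clark_le hμ hMxi hone hxibar 0 (by simp)
  have hUγn : ‖Uγ‖ ≤ 1 := norm_clark_le hμ hMxi hone hxibar γ (le_of_eq hγ)
  have hadjn : ∀ T : Lp ℂ 2 μ →L[ℂ] Lp ℂ 2 μ, ‖T‖ ≤ 1 →
      ‖z • ContinuousLinearMap.adjoint T‖ < 1 := by
    intro T hT
    rw [norm_smul, LinearIsometryEquiv.norm_map ContinuousLinearMap.adjoint T]
    calc ‖z‖ * ‖T‖ ≤ ‖z‖ * 1 := by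
          exact mul_le_mul_of_nonneg_left hT (norm_nonneg z)
      _ = ‖z‖ := mul_one _
      _ < 1 := hzn
  set A : Lp ℂ 2 μ →L[ℂ] Lp ℂ 2 μ := 1 - z • ContinuousLinearMap.adjoint U0 with hAdef
  set B : Lp ℂ 2 μ →L[ℂ] Lp ℂ 2 μ := 1 - z • ContinuousLinearMap.adjoint Uγ with hBdef
  have hAu : IsUnit A := isUnit_one_sub_of_norm_lt_one (hadjn U0 hU0n)
  have hBu : IsUnit B := isUnit_one_sub_of_norm_lt_one (hadjn Uγ hUγn)
  have hA1 : Ring.inverse A * A = 1 := Ring.inverse_mul_cancel _ hAu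
  have hB2 : B * Ring.inverse B = 1 := Ring.mul_inverse_cancel _ hBu
  -- RA one = one
  have hAone : A one = one := by
    rw [hAdef]
    simp [ContinuousLinearMap.sub_apply, ContinuousLinearMap.smul_apply,
      (show ContinuousLinearMap.adjoint U0 one = 0 from adj_U0_one hμ hMxi hone hxibar)]
  have hRAone : Ring.inverse A one = one := by
    conv_lhs => rw [← hAone]
    rw [← ContinuousLinearMap.mul_apply, hA1, ContinuousLinearMap.one_apply]
  -- defect operators
  have hD0x : D0 xibar = xibar := by
    refine pos_sq_fix hD0pos ?_
    have h := congrArg (fun T : Lp ℂ 2 μ →L[ℂ] Lp ℂ 2 μ => T xibar) hD0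
    simpa [ContinuousLinearMap.comp_apply, ContinuousLinearMap.sub_apply,
      (show U0 xibar = 0 from U0_xibar hμ hMxi hone hxibar)] using h
  have hDs0x : Ds0 one = one := by
    refine pos_sq_fix hDs0pos ?_
    have h := congrArg (fun T : Lp ℂ 2 μ →L[ℂ] Lp ℂ 2 μ => T one) hDs0
    simpa [ContinuousLinearMap.comp_apply, ContinuousLinearMap.sub_apply,
      (show ContinuousLinearMap.adjoint U0 one = 0 from adj_U0_one hμ hMxi hone hxibar)] using h
  -- the characteristic function
  have hθ : charF U0 D0 Ds0 xibar one z = z * inner ℂ one (Ring.inverse A xibar) := by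
    unfold charF
    rw [ContinuousLinearMap.add_apply, ContinuousLinearMap.neg_apply,
      U0_xibar hμ hMxi hone hxibar, neg_zero, zero_add,
      ContinuousLinearMap.smul_apply, ContinuousLinearMap.comp_apply,
      ContinuousLinearMap.comp_apply, hD0x, inner_smul_right]
    congr 1
    have hsa : ContinuousLinearMap.adjoint Ds0 = Ds0 :=
      ContinuousLinearMap.isSelfAdjoint_iff'.mp hDs0pos.isSelfAdjoint
    rw [← adjoint_inner_left, hsa, hDs0x]
  -- the function F
  set w : Lp ℂ 2 μ := Ring.inverse B one with hwdef
  set F : ℂ := inner ℂ one w with hFdef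
  have hBw : B w = one := by
    rw [hwdef, ← ContinuousLinearMap.mul_apply, hB2, ContinuousLinearMap.one_apply]
  have hadj : ContinuousLinearMap.adjoint Uγ w
      = ContinuousLinearMap.adjoint U0 w + (conj γ * F) • xibar := by
    have h := adj_clark_apply hμ hMxi hone hxibar γ w
    rw [← hU0def, ← hUγdef, ← hFdef] at h
    exact h
  have hAw : A w = one + (z * (conj γ * F)) • xibar := by
    have h0 : A w = B w + z • ((conj γ * F) • xibar) := by
      rw [hAdef, hBdef]
      simp only [ContinuousLinearMap.sub_apply, ContinuousLinearMap.smul_apply,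
        ContinuousLinearMap.one_apply]
      rw [hadj, smul_add]
      abel
    rw [h0, hBw, smul_smul]
  have hweq : w = one + (z * (conj γ * F)) • Ring.inverse A xibar := by
    have h2 := congrArg (fun v => Ring.inverse A v) hAw
    rw [← ContinuousLinearMap.mul_apply, hA1, ContinuousLinearMap.one_apply] at h2
    rw [h2, map_add, ContinuousLinearMap.map_smul, hRAone]
  have hFeq : F = 1 + conj γ * (z * inner ℂ one (Ring.inverse A xibar)) * F := by
    conv_lhs => rw [hFdef, hweq]
    rw [inner_add_right, inner_smul_right, inner_one_one'' hone]
    ring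
  -- the series for F
  have hmom : ∀ n : ℕ, (inner ℂ one (((ContinuousLinearMap.adjoint Uγ)^n) one) : ℂ)
      = ∫ ξ, (conj ξ)^n ∂μγ := by
    intro n
    have h1 := hμγmom (-(n:ℤ))
    have h2 : zpowOp Uγ (-(n:ℤ)) = (ContinuousLinearMap.adjoint Uγ)^n := by
      rcases Nat.eq_zero_or_pos n with h | h
      · subst h; simp [zpowOp]
      · have hneg : ¬ (0 ≤ -(n:ℤ)) := by omega
        rw [zpowOp, if_neg hneg]
        norm_num
    rw [h2] at h1
    rw [h1]
    refine integral_congr_ae ?_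
    filter_upwards [ae_abs_one hμγsupp] with ξ hξ
    have hinv : ξ⁻¹ = conj ξ := by
      refine inv_eq_of_mul_eq_one_right ?_
      rw [Complex.mul_conj, Complex.normSq_eq_norm_sq, hξ]
      simp
    rw [zpow_neg, zpow_natCast, ← inv_pow, hinv]
  have hsumgeo := hadjn Uγ hUγn
  have hRB : HasSum (fun n : ℕ => (z • ContinuousLinearMap.adjoint Uγ)^n) (Ring.inverse B) :=
    hasSum_geom_series_inverse _ hsumgeo
  have hFsum : HasSum (fun n : ℕ =>
      z^n * (inner ℂ one (((ContinuousLinearMap.adjoint Uγ)^n) one) : ℂ)) F := by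
    have h := hRB.mapL ((innerSL ℂ one).comp
      ((ContinuousLinearMap.apply ℂ (Lp ℂ 2 μ)) one))
    simp only [ContinuousLinearMap.coe_comp', Function.comp_apply,
      ContinuousLinearMap.apply_apply, innerSL_apply_apply] at h
    have hval : (inner ℂ one (Ring.inverse B one) : ℂ) = F := by rw [hFdef, hwdef]
    have hfn : ∀ n : ℕ, (inner ℂ one (((z • ContinuousLinearMap.adjoint Uγ)^n) one) : ℂ)
        = z^n * inner ℂ one (((ContinuousLinearMap.adjoint Uγ)^n) one) := by
      intro n
      rw [smul_pow, ContinuousLinearMap.smul_apply, inner_smul_right]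
    rw [hval] at h
    simp only [hfn] at h
    exact h
  -- the Cauchy transform as a series
  have habs : ∀ᵐ ξ ∂μγ, ‖ξ‖ = 1 := ae_abs_one hμγsupp
  have hcau : cauchyT μγ oneFun z = ∫ ξ, ∑' n : ℕ, (conj ξ * z)^n ∂μγ := by
    unfold cauchyT oneFun
    refine integral_congr_ae ?_
    filter_upwards [habs] with ξ hξ
    have hlt' : ‖conj ξ * z‖ < 1 := by
      rw [norm_mul, Complex.norm_conj, hξ, one_mul]
      exact hz
    rw [tsum_geometric_of_norm_lt_one hlt', one_div]
  have hnn : ∀ n : ℕ, ∫⁻ ξ, ‖(conj ξ * z)^n‖₊ ∂μγ = (‖z‖₊ : ℝ≥0∞)^n := by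
    intro n
    rw [lintegral_congr_ae (g := fun _ => ((‖z‖₊ : ℝ≥0∞))^n) ?_]
    · rw [lintegral_const, measure_univ, mul_one]
    · filter_upwards [habs] with ξ hξ
      have h1 : ‖ξ‖₊ = 1 := by
        apply NNReal.coe_injective
        simp [coe_nnnorm, hξ]
      rw [nnnorm_pow, nnnorm_mul, RCLike.nnnorm_conj, h1, one_mul]
      push_cast
      ring
  have hint : ∫ ξ, ∑' n : ℕ, (conj ξ * z)^n ∂μγ = ∑' n : ℕ, ∫ ξ, (conj ξ * z)^n ∂μγ := by
    refine integral_tsum (fun n => ?_) ?_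
    · exact ((Complex.continuous_conj.mul continuous_const).pow n).aestronglyMeasurable
    · simp_rw [enorm_eq_nnnorm]
      rw [tsum_congr hnn, ENNReal.tsum_geometric]
      refine ENNReal.inv_ne_top.mpr ?_
      intro hc
      have hle : (1 : ℝ≥0∞) ≤ (‖z‖₊ : ℝ≥0∞) := tsub_eq_zero_iff_le.mp hc
      have : ((‖z‖₊ : ℝ≥0∞)) < 1 := by
        rw [← ENNReal.coe_one, ENNReal.coe_lt_coe]
        rw [← NNReal.coe_lt_coe]
        simpa [coe_nnnorm] using hzn
      exact absurd hle (not_le.mpr this)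
  have hterm : ∀ n : ℕ, ∫ ξ, (conj ξ * z)^n ∂μγ = z^n * ∫ ξ, (conj ξ)^n ∂μγ := by
    intro n
    calc ∫ ξ, (conj ξ * z)^n ∂μγ = ∫ ξ, z^n • (conj ξ)^n ∂μγ := by
          refine integral_congr_ae (Eventually.of_forall fun ξ => ?_)
          show (conj ξ * z)^n = z^n * (conj ξ)^n
          rw [mul_pow]
          ring
      _ = z^n • ∫ ξ, (conj ξ)^n ∂μγ := integral_smul _ _
      _ = z^n * ∫ ξ, (conj ξ)^n ∂μγ := rfl
  have hcauF : cauchyT μγ oneFun z = F := by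
    rw [hcau, hint]
    rw [← hFsum.tsum_eq]
    refine tsum_congr fun n => ?_
    rw [hterm n, hmom n]
  rw [hcauF, hθ]
  linear_combination hFeq

end
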